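/- Let E and F be independent random variables, let 𝓔(E,F) be an event depending on them, and let k ∈ ℕ. If E₀, E₁, ..., E_k are independent copies of E (all independent of F), then Pr[𝓔(E,F)] ≤ (Pr[𝓔(E₀,F) ∩ 𝓔(E₁,F) ∩ ... ∩ 𝓔(E_k,F)])^{1/(k+1)}. -/

import Mathlib

open MeasureTheory ProbabilityTheory
open scoped ENNReal

/-- **decoupling with multiple copies.** Let `E` and `Y` (called `F` in the
paper) be independent random variables, `𝓔` a measurable event depending on them, and
`k ∈ ℕ`. If `E₀,...,E_k` are independent copies of `E`, all of them (together with `Y`)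
jointly independent, then
`Pr[𝓔(E,Y)] ≤ Pr[𝓔(E₀,Y) ∩ ... ∩ 𝓔(E_k,Y)]^{1/(k+1)}`.
The joint independence of `(Y, E₀, ..., E_k)` is encoded by `iIndepFun` over the index type
`Option (Fin (k+1))`, where `none` indexes `Y` and `some i` indexes `Eᵢ`. -/
theorem stmt4 {Ω : Type*} {α β : Type u} [MeasurableSpace Ω]
    [mα : MeasurableSpace α] [mβ : MeasurableSpace β]
    (μ : Measure Ω) [IsProbabilityMeasure μ] (k : ℕ)
    (E : Ω → α) (Y : Ω → β) (Ec : Fin (k + 1) → Ω → α)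
    (hE : Measurable E) (hY : Measurable Y) (hEc : ∀ i, Measurable (Ec i))
    (𝓔 : Set (α × β)) (h𝓔 : MeasurableSet 𝓔)
    (hEY : IndepFun E Y μ)
    (hdist : ∀ i, Measure.map (Ec i) μ = Measure.map E μ)
    (hjoint : iIndepFun
      (m := fun o : Option (Fin (k + 1)) =>
        Option.rec (motive := fun o => MeasurableSpace (Option.rec β (fun _ => α) o))
          mβ (fun _ => mα) o)
      (fun o : Option (Fin (k + 1)) =>
        Option.rec (motive := fun o => Ω → Option.rec β (fun _ => α) o)
          Y (fun i => Ec i) o) μ) :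
    (μ {ω | (E ω, Y ω) ∈ 𝓔}).toReal ≤
      (μ {ω | ∀ i, (Ec i ω, Y ω) ∈ 𝓔}).toReal ^ ((1 : ℝ) / (k + 1)) := by
  classical
  set ν := μ.map Y with hν
  set ρ := μ.map E with hρ
  haveI : IsProbabilityMeasure ν := Measure.isProbabilityMeasure_map hY.aemeasurable
  haveI : IsProbabilityMeasure ρ := Measure.isProbabilityMeasure_map hE.aemeasurable
  set g : β → ℝ≥0∞ := fun y => ρ ((fun x => (x, y)) ⁻¹' 𝓔) with hg
  have hgm : Measurable g := measurable_measure_prodMk_right h𝓔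
  -- Step A
  have hA : μ {ω | (E ω, Y ω) ∈ 𝓔} = ∫⁻ y, g y ∂ν := by
    have hmap : μ.map (fun ω => (E ω, Y ω)) = ρ.prod ν :=
      (indepFun_iff_map_prod_eq_prod_map_map hE.aemeasurable hY.aemeasurable).mp hEY
    calc μ {ω | (E ω, Y ω) ∈ 𝓔} = μ.map (fun ω => (E ω, Y ω)) 𝓔 := by
          rw [Measure.map_apply (hE.prodMk hY) h𝓔]; rfl
      _ = (ρ.prod ν) 𝓔 := by rw [hmap]
      _ = ∫⁻ y, g y ∂ν := Measure.prod_apply_symm h𝓔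
  -- independence of the copies
  have hiEc : iIndepFun (m := fun _ : Fin (k+1) => mα) Ec μ := by
    rw [iIndepFun_iff_measure_inter_preimage_eq_mul]
    intro S sets hsets
    have h := hjoint.measure_inter_preimage_eq_mul
      (S.map ⟨some, Option.some_injective _⟩)
      (sets := fun o => Option.rec (motive := fun o => Set (Option.rec β (fun _ => α) o))
        Set.univ (fun i => sets i) o)
      (fun o ho => by
        rcases o with _ | i
        · simp at ho
        · simp only [Finset.mem_map, Function.Embedding.coeFn_mk] at ho
          obtain ⟨j, hj, hji⟩ := ho
          rw [← Option.some_injective _ hji]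
          exact hsets j hj)
    rw [Finset.prod_map] at h
    have hset : (⋂ o ∈ S.map ⟨some, Option.some_injective _⟩,
        (Option.rec (motive := fun o => Ω → Option.rec β (fun _ => α) o)
          Y (fun i => Ec i) o) ⁻¹'
          (Option.rec (motive := fun o => Set (Option.rec β (fun _ => α) o))
            Set.univ (fun i => sets i) o)) = ⋂ i ∈ S, Ec i ⁻¹' sets i := by
      ext ω
      simp only [Set.mem_iInter, Finset.mem_map, Function.Embedding.coeFn_mk]
      constructor
      · intro h i hi
        exact h (some i) ⟨i, hi, rfl⟩
      · rintro h o ⟨i, hi, rfl⟩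
        exact h i hi
    rw [hset] at h
    exact h
  -- the tuple map
  set G : Ω → (Fin (k+1) → α) := fun ω i => Ec i ω with hGdef
  have hGm : Measurable G := measurable_pi_lambda _ hEc
  haveI : ∀ i : Fin (k+1), SigmaFinite ((fun _ : Fin (k+1) => ρ) i) := fun _ => inferInstance
  have hGmap : μ.map G = Measure.pi (fun _ : Fin (k+1) => ρ) := by
    refine (Measure.pi_eq fun s hs => ?_).symm
    rw [Measure.map_apply hGm (MeasurableSet.univ_pi hs)]
    have : G ⁻¹' Set.pi Set.univ s = ⋂ i, Ec i ⁻¹' s i := by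
      ext ω; simp [Set.mem_pi, hGdef]
    rw [this, hiEc.meas_iInter fun i => ⟨s i, hs i, rfl⟩]
    exact Finset.prod_congr rfl fun i _ => by
      rw [← Measure.map_apply (hEc i) (hs i), hdist i]
  -- independence of G and Y
  have hGY : IndepFun G Y μ := by
    letI mo : ∀ o : Option (Fin (k+1)), MeasurableSpace (Option.rec β (fun _ => α) o) :=
      fun o => Option.rec (motive := fun o => MeasurableSpace (Option.rec β (fun _ => α) o))
        mβ (fun _ => mα) o
    have h2 := hjoint.indepFun_finset {none}
      (Finset.univ.map ⟨some, Option.some_injective (Fin (k+1))⟩)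
      (by simp [Finset.disjoint_left]) (by
        rintro (_ | i)
        · exact hY
        · exact hEc i)
    have hm1 : @Measurable (∀ o : ({none} : Finset (Option (Fin (k+1)))),
        Option.rec β (fun _ => α) (o : Option (Fin (k+1)))) β
        (@MeasurableSpace.pi _ _ (fun o => mo o)) mβ
        (fun v => v ⟨none, Finset.mem_singleton_self none⟩) :=
      measurable_pi_apply (X := fun o : ({none} : Finset (Option (Fin (k+1)))) =>
        Option.rec β (fun _ => α) (o : Option (Fin (k+1)))) _
    have hm2 : @Measurable (∀ o : ((Finset.univ.map
          ⟨some, Option.some_injective (Fin (k+1))⟩) : Finset (Option (Fin (k+1)))),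
        Option.rec β (fun _ => α) (o : Option (Fin (k+1)))) (Fin (k+1) → α)
        (@MeasurableSpace.pi _ _ (fun o => mo o)) (@MeasurableSpace.pi _ _ (fun _ => mα))
        (fun v i => v ⟨some i,
          Finset.mem_map_of_mem ⟨some, Option.some_injective (Fin (k+1))⟩
            (Finset.mem_univ i)⟩) := by
      refine @measurable_pi_lambda (∀ o : ((Finset.univ.map
          ⟨some, Option.some_injective (Fin (k+1))⟩) : Finset (Option (Fin (k+1)))),
        Option.rec β (fun _ => α) (o : Option (Fin (k+1)))) (Fin (k+1)) (fun _ => α)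
        (@MeasurableSpace.pi _ _ (fun o => mo o)) (fun _ => mα) _ fun i => ?_
      exact measurable_pi_apply (X := fun o : ((Finset.univ.map
          ⟨some, Option.some_injective (Fin (k+1))⟩) : Finset (Option (Fin (k+1)))) =>
        Option.rec β (fun _ => α) (o : Option (Fin (k+1)))) _
    exact ((h2.comp hm1 hm2)).symm
  -- Step B
  have hS : MeasurableSet {p : (Fin (k+1) → α) × β | ∀ i, (p.1 i, p.2) ∈ 𝓔} := by
    have h : {p : (Fin (k+1) → α) × β | ∀ i, (p.1 i, p.2) ∈ 𝓔} =
        ⋂ i, (fun p : (Fin (k+1) → α) × β => (p.1 i, p.2)) ⁻¹' 𝓔 := by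
      ext p; simp
    rw [h]
    exact MeasurableSet.iInter fun i =>
      (((measurable_pi_apply i).comp measurable_fst).prodMk measurable_snd) h𝓔
  have hB : μ {ω | ∀ i, (Ec i ω, Y ω) ∈ 𝓔} = ∫⁻ y, g y ^ (k+1) ∂ν := by
    have hmap : μ.map (fun ω => (G ω, Y ω)) = (Measure.pi fun _ : Fin (k+1) => ρ).prod ν := by
      rw [(indepFun_iff_map_prod_eq_prod_map_map hGm.aemeasurable hY.aemeasurable).mp hGY, hGmap]
    calc μ {ω | ∀ i, (Ec i ω, Y ω) ∈ 𝓔}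
        = μ.map (fun ω => (G ω, Y ω)) {p | ∀ i, (p.1 i, p.2) ∈ 𝓔} := by
          rw [Measure.map_apply (hGm.prodMk hY) hS]; rfl
      _ = ((Measure.pi fun _ : Fin (k+1) => ρ).prod ν) {p | ∀ i, (p.1 i, p.2) ∈ 𝓔} := by
          rw [hmap]
      _ = ∫⁻ y, (Measure.pi fun _ : Fin (k+1) => ρ)
            ((fun v => (v, y)) ⁻¹' {p | ∀ i, (p.1 i, p.2) ∈ 𝓔}) ∂ν :=
          Measure.prod_apply_symm hS
      _ = ∫⁻ y, g y ^ (k+1) ∂ν := by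
          refine lintegral_congr fun y => ?_
          have h : (fun v : Fin (k+1) → α => (v, y)) ⁻¹' {p | ∀ i, (p.1 i, p.2) ∈ 𝓔} =
              Set.pi Set.univ (fun _ => (fun x => (x, y)) ⁻¹' 𝓔) := by
            ext v; simp [Set.mem_pi]
          rw [h, Measure.pi_pi]
          simp [hg, Finset.prod_const, Finset.card_univ]
  -- Jensen / Hölder step
  have hJ : ∫⁻ y, g y ∂ν ≤ (∫⁻ y, g y ^ (k+1) ∂ν) ^ ((1:ℝ)/(k+1)) := by
    have hk : ((k : ℝ) + 1) ≠ 0 := by positivity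
    have hp : (0:ℝ) ≤ 1/((k:ℝ)+1) := by positivity
    have hq : (0:ℝ) ≤ (k:ℝ)/((k:ℝ)+1) := by positivity
    have hpq : 1/((k:ℝ)+1) + (k:ℝ)/((k:ℝ)+1) = 1 := by field_simp; ring
    have H := ENNReal.lintegral_mul_norm_pow_le (μ := ν)
      (f := fun y => g y ^ (k+1)) (g := fun _ => (1:ℝ≥0∞))
      ((hgm.pow_const _).aemeasurable) aemeasurable_const hp hq hpq
    have h1 : ∀ y, (g y ^ (k+1)) ^ ((1:ℝ)/((k:ℝ)+1)) * (1:ℝ≥0∞) ^ ((k:ℝ)/((k:ℝ)+1))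
        = g y := by
      intro y
      rw [ENNReal.one_rpow, mul_one, ← ENNReal.rpow_natCast (g y) (k+1),
        ← ENNReal.rpow_mul]
      push_cast
      rw [mul_one_div, div_self hk, ENNReal.rpow_one]
    simp only [h1] at H
    calc ∫⁻ y, g y ∂ν ≤ (∫⁻ y, g y ^ (k+1) ∂ν) ^ ((1:ℝ)/((k:ℝ)+1)) *
          (∫⁻ _, (1:ℝ≥0∞) ∂ν) ^ ((k:ℝ)/((k:ℝ)+1)) := H
      _ = (∫⁻ y, g y ^ (k+1) ∂ν) ^ ((1:ℝ)/((k:ℝ)+1)) := by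
          simp [lintegral_one]
  -- conclude
  have hfin : μ {ω | ∀ i, (Ec i ω, Y ω) ∈ 𝓔} ≠ ⊤ := measure_ne_top _ _
  have hle : μ {ω | (E ω, Y ω) ∈ 𝓔} ≤
      (μ {ω | ∀ i, (Ec i ω, Y ω) ∈ 𝓔}) ^ ((1:ℝ)/((k:ℝ)+1)) := by
    rw [hA, hB]; exact hJ
  calc (μ {ω | (E ω, Y ω) ∈ 𝓔}).toReal
      ≤ ((μ {ω | ∀ i, (Ec i ω, Y ω) ∈ 𝓔}) ^ ((1:ℝ)/((k:ℝ)+1))).toReal :=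
        ENNReal.toReal_mono (ENNReal.rpow_ne_top_of_nonneg (by positivity) hfin) hle
    _ = (μ {ω | ∀ i, (Ec i ω, Y ω) ∈ 𝓔}).toReal ^ ((1:ℝ)/((k:ℝ)+1)) :=
        (ENNReal.toReal_rpow _ _).symm
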